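/- Let ⟨A | R⟩ be a presentation satisfying C(4) and w ∈ A*. If a relation word u appears as a factor of some word equivalent to w (i.e., of some w' with (w, w') ∈ R#), then w contains as a factor either the middle word Y_u of u or the middle word of some complement of u. -/

import Mathlib

variable {A : Type*}

/-- One step of rewriting with respect to a relation set `R`. -/
def OneStep (R : Set (List A × List A)) (u v : List A) : Prop :=
  ∃ x y p q, ((p, q) ∈ R ∨ (q, p) ∈ R) ∧ u = x ++ p ++ y ∧ v = x ++ q ++ y

/-- A (two-sided) congruence on the free monoid `A*`. -/
def IsCong (s : List A → List A → Prop) : Prop :=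
  Equivalence s ∧ ∀ u v x y : List A, s u v → s (x ++ u ++ y) (x ++ v ++ y)

/-- The least congruence on `A*` containing `R`; `Cong R u v` means `(u, v) ∈ R#`. -/
def Cong (R : Set (List A × List A)) (u v : List A) : Prop :=
  ∀ s, IsCong s → (∀ p ∈ R, s p.1 p.2) → s u v

/-- The relation words of the presentation `⟨A | R⟩`. -/
def RelWords (R : Set (List A × List A)) : Set (List A) :=
  {w | ∃ v, (w, v) ∈ R ∨ (v, w) ∈ R}

/-- `p` is a piece of the presentation `⟨A | R⟩`. -/
def IsPiece (R : Set (List A × List A)) (p : List A) : Prop :=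
  p = [] ∨
    (∃ u v, u ∈ RelWords R ∧ v ∈ RelWords R ∧ u ≠ v ∧ p <:+: u ∧ p <:+: v) ∨
    (∃ u x x' y y', u ∈ RelWords R ∧ u = x ++ p ++ y ∧ u = x' ++ p ++ y' ∧ x ≠ x')

/-- The presentation satisfies `C(n)`: no relation word is a product of fewer than `n` pieces. -/
def SatisfiesC (R : Set (List A × List A)) (n : ℕ) : Prop :=
  ∀ u ∈ RelWords R, ∀ l : List (List A), (∀ p ∈ l, IsPiece R p) → u = l.flatten →
    n ≤ l.length

/-- `X` is the maximal piece prefix of `u`. -/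
def MaxPiecePrefix (R : Set (List A × List A)) (u X : List A) : Prop :=
  X <+: u ∧ IsPiece R X ∧ ∀ p, p <+: u → IsPiece R p → p.length ≤ X.length

/-- `Z` is the maximal piece suffix of `u`. -/
def MaxPieceSuffix (R : Set (List A × List A)) (u Z : List A) : Prop :=
  Z <:+ u ∧ IsPiece R Z ∧ ∀ p, p <:+ u → IsPiece R p → p.length ≤ Z.length

/-- `u = X ++ Y ++ Z` is the decomposition of the relation word `u` into its maximal
piece prefix `X`, middle word `Y`, and maximal piece suffix `Z`. -/
def RelDecomp (R : Set (List A × List A)) (u X Y Z : List A) : Prop :=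
  u ∈ RelWords R ∧ MaxPiecePrefix R u X ∧ MaxPieceSuffix R u Z ∧ u = X ++ Y ++ Z

/-- `Y` is the middle word of the relation word `u`. -/
def MiddleWord (R : Set (List A × List A)) (u Y : List A) : Prop :=
  ∃ X Z, RelDecomp R u X Y Z

/-- `v` is a complement of the relation word `u`. -/
def ComplRel (R : Set (List A × List A)) (u v : List A) : Prop :=
  Relation.ReflTransGen (fun a b => (a, b) ∈ R ∨ (b, a) ∈ R) u v

/-- `a ++ X ++ Y` is a relation prefix of `w`. -/
def IsRelPrefix (R : Set (List A × List A)) (w a X Y : List A) : Prop :=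
  (∃ u Z, RelDecomp R u X Y Z) ∧ (a ++ X ++ Y) <+: w

section Aux

variable {R : Set (List A × List A)}

theorem split_le {a b c d : List A} (h : a ++ b = c ++ d) (hl : a.length ≤ c.length) :
    ∃ m, c = a ++ m ∧ b = m ++ d := by
  rcases List.append_eq_append_iff.1 h with ⟨m, hm1, hm2⟩ | ⟨m, hm1, hm2⟩
  · exact ⟨m, hm1, hm2⟩
  · subst hm1
    have hm : m = [] := by
      rw [List.length_append] at hl
      exact List.eq_nil_of_length_eq_zero (by omega)
    subst hm; exact ⟨[], by simp, by simpa using hm2.symm⟩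

theorem mem_relWords_left {p q : List A} (h : (p, q) ∈ R ∨ (q, p) ∈ R) : p ∈ RelWords R :=
  ⟨q, h⟩

theorem mem_relWords_right {p q : List A} (h : (p, q) ∈ R ∨ (q, p) ∈ R) : q ∈ RelWords R :=
  ⟨p, h.symm⟩

theorem isPiece_infix {p q : List A} (h : IsPiece R p) (hq : q <:+: p) : IsPiece R q := by
  rcases h with h | ⟨u, v, hu, hv, huv, h1, h2⟩ | ⟨u, x, x', y, y', hu, h1, h2, hne⟩
  · subst h; left; exact List.eq_nil_of_infix_nil hq
  · right; left; exact ⟨u, v, hu, hv, huv, hq.trans h1, hq.trans h2⟩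
  · rcases hq with ⟨s, e, hse⟩
    right; right
    refine ⟨u, x ++ s, x' ++ s, e ++ y, e ++ y', hu, ?_, ?_, ?_⟩
    · rw [h1, ← hse]; simp
    · rw [h2, ← hse]; simp
    · intro hcon
      exact hne (List.append_cancel_right hcon)

theorem no_small (hC : SatisfiesC R 4) {u : List A} (hu : u ∈ RelWords R) (l : List (List A))
    (hl : ∀ p ∈ l, IsPiece R p) (hf : u = l.flatten) (hlen : l.length < 4) : False := by
  have := hC u hu l hl hf; omega

theorem relword_not_piece (hC : SatisfiesC R 4) {u : List A} (hu : u ∈ RelWords R)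
    (h : IsPiece R u) : False := by
  refine no_small hC hu [u] ?_ (by simp) (by simp)
  intro p hp; simp at hp; subst hp; exact h

theorem piece_of_two {p r x₁ y₁ x₂ y₂ m : List A} (hp : p ∈ RelWords R) (hr : r ∈ RelWords R)
    (h1 : p = x₁ ++ m ++ y₁) (h2 : r = x₂ ++ m ++ y₂)
    (hne : p ≠ r ∨ x₁.length ≠ x₂.length) : IsPiece R m := by
  by_cases hpr : p = r
  · subst hpr
    rcases hne with hne | hne
    · exact absurd rfl hne
    · right; right
      exact ⟨p, x₁, x₂, y₁, y₂, hp, h1, h2, fun hc => hne (by rw [hc])⟩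
  · right; left
    exact ⟨p, r, hp, hr, hpr, ⟨x₁, y₁, h1.symm⟩, ⟨x₂, y₂, h2.symm⟩⟩

theorem middle_not_piece (hC : SatisfiesC R 4) {u X Y Z : List A} (hd : RelDecomp R u X Y Z)
    (h : IsPiece R Y) : False := by
  obtain ⟨hu, hX, hZ, he⟩ := hd
  refine no_small hC hu [X, Y, Z] ?_ (by simp [he]) (by simp)
  intro p hp
  simp at hp
  rcases hp with h1 | h1 | h1 <;> subst h1
  · exact hX.2.1
  · exact h
  · exact hZ.2.1

theorem middleWord_ne_nil (hC : SatisfiesC R 4) {u X Y Z : List A} (hd : RelDecomp R u X Y Z) :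
    Y ≠ [] := by
  intro h
  exact middle_not_piece hC hd (by rw [h]; left; rfl)

end Aux

section Dec
variable {R : Set (List A × List A)}
open Classical in
theorem exists_decomp (hC : SatisfiesC R 4) {u : List A} (hu : u ∈ RelWords R) :
    ∃ X Y Z, RelDecomp R u X Y Z := by
  classical
  set n := u.length with hn
  set nX := Nat.findGreatest (fun k => IsPiece R (u.take k)) n with hnX
  set nZ := Nat.findGreatest (fun k => IsPiece R (u.drop (n - k))) n with hnZ
  have hXle : nX ≤ n := Nat.findGreatest_le n
  have hZle : nZ ≤ n := Nat.findGreatest_le n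
  have hXp : IsPiece R (u.take nX) :=
    Nat.findGreatest_spec (P := fun k => IsPiece R (u.take k)) (Nat.zero_le n) (by simp; left; rfl)
  have hZp : IsPiece R (u.drop (n - nZ)) :=
    Nat.findGreatest_spec (P := fun k => IsPiece R (u.drop (n - k))) (Nat.zero_le n)
      (by simp [hn]; left; rfl)
  have hXmax : ∀ p, p <+: u → IsPiece R p → p.length ≤ nX := by
    intro p hp hpp
    have hlen : p.length ≤ n := hp.length_le
    have : p = u.take p.length := List.prefix_iff_eq_take.1 hp
    exact Nat.le_findGreatest hlen (by rw [← this]; exact hpp)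
  have hZmax : ∀ p, p <:+ u → IsPiece R p → p.length ≤ nZ := by
    intro p hp hpp
    have hlen : p.length ≤ n := hp.length_le
    have : p = u.drop (n - p.length) := List.suffix_iff_eq_drop.1 hp
    exact Nat.le_findGreatest hlen (by rw [← this]; exact hpp)
  have hsum : nX + nZ ≤ n := by
    by_contra hcon
    push_neg at hcon
    have hdp : IsPiece R (u.drop nX) := by
      have h1 : u.drop nX = (u.drop (n - nZ)).drop (nX - (n - nZ)) := by
        rw [List.drop_drop]
        congr 1
        omega
      refine isPiece_infix hZp ?_
      rw [h1]
      exact (List.drop_suffix _ _).isInfix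
    refine no_small hC hu [u.take nX, u.drop nX] ?_ (by simp) (by simp)
    intro p hp
    simp at hp
    rcases hp with h | h <;> subst h
    · exact hXp
    · exact hdp
  refine ⟨u.take nX, (u.drop nX).take (n - nX - nZ), u.drop (n - nZ), hu, ⟨List.take_prefix _ _, hXp, ?_⟩, ⟨List.drop_suffix _ _, hZp, ?_⟩, ?_⟩
  · intro p hp hpp
    have h1 := hXmax p hp hpp
    have h2 : (u.take nX).length = nX := by simp [List.length_take]; omega
    omega
  · intro p hp hpp
    have h1 := hZmax p hp hpp
    have h2 : (u.drop (n - nZ)).length = nZ := by simp [List.length_drop]; omega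
    omega
  · conv_lhs => rw [← List.take_append_drop nX u]
    rw [List.append_assoc]
    congr 1
    conv_lhs => rw [← List.take_append_drop (n - nX - nZ) (u.drop nX)]
    congr 1
    rw [List.drop_drop]
    congr 1
    omega
end Dec

section Blk
variable {R : Set (List A × List A)}

inductive BlockedR (R : Set (List A × List A)) : List A → Prop
  | full (r X Y Z t : List A) : RelDecomp R r X Y Z → BlockedR R (X ++ Y ++ Z ++ t)
  | cut (r X Y Z Z₁ t : List A) : RelDecomp R r X Y Z → Z₁ <+: Z → BlockedR R t →
      BlockedR R (X ++ Y ++ Z₁ ++ t)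

inductive BlockedL (R : Set (List A × List A)) : List A → Prop
  | full (r X Y Z s : List A) : RelDecomp R r X Y Z → BlockedL R (s ++ (X ++ Y ++ Z))
  | cut (r X Y Z X₁ s : List A) : RelDecomp R r X Y Z → X₁ <:+ X → BlockedL R s →
      BlockedL R (s ++ (X₁ ++ Y ++ Z))

theorem blockedR_mk {r X Y Z Z₁ t : List A} (hd : RelDecomp R r X Y Z) (h1 : Z₁ <+: Z)
    (h2 : Z₁ = Z ∨ BlockedR R t) : BlockedR R (X ++ Y ++ Z₁ ++ t) := by
  rcases h2 with h2 | h2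
  · subst h2; exact BlockedR.full _ _ _ _ _ hd
  · exact BlockedR.cut r X Y Z Z₁ t hd h1 h2

theorem blockedL_mk {r X Y Z X₁ s : List A} (hd : RelDecomp R r X Y Z) (h1 : X₁ <:+ X)
    (h2 : X₁ = X ∨ BlockedL R s) : BlockedL R (s ++ (X₁ ++ Y ++ Z)) := by
  rcases h2 with h2 | h2
  · subst h2; exact BlockedL.full _ _ _ _ _ hd
  · exact BlockedL.cut r X Y Z X₁ s hd h1 h2

theorem BlockedR.dest {t : List A} (h : BlockedR R t) :
    ∃ r X Y Z Z₁ t', RelDecomp R r X Y Z ∧ Z₁ <+: Z ∧ (Z₁ = Z ∨ BlockedR R t') ∧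
      t = X ++ Y ++ Z₁ ++ t' := by
  cases h with
  | full r X Y Z t' hd => exact ⟨r, X, Y, Z, Z, t', hd, List.prefix_refl _, Or.inl rfl, rfl⟩
  | cut r X Y Z Z₁ t' hd h1 h2 => exact ⟨r, X, Y, Z, Z₁, t', hd, h1, Or.inr h2, rfl⟩

theorem BlockedL.dest {a : List A} (h : BlockedL R a) :
    ∃ r X Y Z X₁ s, RelDecomp R r X Y Z ∧ X₁ <:+ X ∧ (X₁ = X ∨ BlockedL R s) ∧
      a = s ++ (X₁ ++ Y ++ Z) := by
  cases h with
  | full r X Y Z s hd => exact ⟨r, X, Y, Z, X, s, hd, List.suffix_refl _, Or.inl rfl, rfl⟩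
  | cut r X Y Z X₁ s hd h1 h2 => exact ⟨r, X, Y, Z, X₁, s, hd, h1, Or.inr h2, rfl⟩

def InvW (R : Set (List A × List A)) (u v : List A) : Prop :=
  ∃ u' X' Y' Z' a X₁ Z₁ t, ComplRel R u u' ∧ RelDecomp R u' X' Y' Z' ∧
    X₁ <:+ X' ∧ Z₁ <+: Z' ∧ (X₁ = X' ∨ BlockedL R a) ∧ (Z₁ = Z' ∨ BlockedR R t) ∧
    v = a ++ X₁ ++ Y' ++ Z₁ ++ t

theorem blockedR_attack (hC : SatisfiesC R 4) {t g p m : List A} (hB : BlockedR R t)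
    (hg : g <+: t) (hgne : g ≠ []) (hp : p ∈ RelWords R) (hm : m ≠ []) (hpe : p = m ++ g) :
    IsPiece R g := by
  obtain ⟨r, X, Y, Z, Z₁, t', hdec, hZ1, hbr, rfl⟩ := hB.dest
  obtain ⟨z₂, hz₂⟩ := hZ1
  have hr : r ∈ RelWords R := hdec.1
  have hre : r = (X ++ Y ++ Z₁) ++ z₂ := by rw [hdec.2.2.2, ← hz₂]; simp
  obtain ⟨w, hw⟩ := hg
  have hmlen : m.length ≠ 0 := fun hh => hm (List.eq_nil_of_length_eq_zero hh)
  rcases le_or_gt g.length (X ++ Y ++ Z₁).length with hle | hlt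
  · obtain ⟨k, hk1, _⟩ := split_le (a := g) (b := w) (c := X ++ Y ++ Z₁) (d := t')
      hw hle
    have h2 : r = [] ++ g ++ (k ++ z₂) := by rw [hre, hk1]; simp
    have h1 : p = m ++ g ++ [] := by simp [hpe]
    refine piece_of_two hp hr h1 h2 ?_
    right
    simp only [List.length_nil]
    omega
  · exfalso
    obtain ⟨k, hk1, _⟩ := split_le (a := X ++ Y ++ Z₁) (b := t') (c := g) (d := w)
      hw.symm (le_of_lt hlt)
    have h1 : p = (m ++ X) ++ Y ++ (Z₁ ++ k) := by rw [hpe, hk1]; simp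
    have h2 : r = X ++ Y ++ Z := hdec.2.2.2
    have hY : IsPiece R Y := by
      refine piece_of_two hp hr h1 h2 ?_
      right
      simp only [List.length_append]
      omega
    exact middle_not_piece hC hdec hY

theorem blockedL_attack (hC : SatisfiesC R 4) {a s p g : List A} (hB : BlockedL R a)
    (hs : s <:+ a) (hsne : s ≠ []) (hp : p ∈ RelWords R) (hg : g ≠ []) (hpe : p = s ++ g) :
    IsPiece R s := by
  obtain ⟨r, X, Y, Z, X₁, s', hdec, hX1, hbl, rfl⟩ := hB.dest
  obtain ⟨x₂, hx₂⟩ := hX1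
  have hr : r ∈ RelWords R := hdec.1
  have hre : r = x₂ ++ (X₁ ++ Y ++ Z) := by rw [hdec.2.2.2, ← hx₂]; simp
  obtain ⟨w, hw⟩ := hs
  have hglen : g.length ≠ 0 := fun hh => hg (List.eq_nil_of_length_eq_zero hh)
  have hwlen := congrArg List.length hw
  simp only [List.length_append] at hwlen
  rcases le_or_gt s.length (X₁ ++ Y ++ Z).length with hle | hlt
  · obtain ⟨k, hk1, hk2⟩ := split_le (a := s') (b := X₁ ++ Y ++ Z) (c := w) (d := s)
      hw.symm (by simp only [List.length_append] at hle ⊢; omega)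
    have h2 : r = (x₂ ++ k) ++ s ++ [] := by rw [hre, hk2]; simp
    have h1 : p = [] ++ s ++ g := by simp [hpe]
    refine piece_of_two hp hr h1 h2 ?_
    by_cases hpr : p = r
    · right
      have h4 := congrArg List.length h2
      have h5 := congrArg List.length hpe
      rw [← hpr] at h4
      simp only [List.length_append, List.length_nil] at h4 h5 ⊢
      omega
    · exact Or.inl hpr
  · exfalso
    obtain ⟨k, hk1, hk2⟩ := split_le (a := w) (b := s) (c := s') (d := X₁ ++ Y ++ Z)
      hw (by simp only [List.length_append] at hlt ⊢; omega)
    have h1 : p = (k ++ X₁) ++ Y ++ (Z ++ g) := by rw [hpe, hk2]; simp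
    have h2 : r = (x₂ ++ X₁) ++ Y ++ Z := by rw [hre]; simp
    have hY : IsPiece R Y := by
      refine piece_of_two hp hr h1 h2 ?_
      by_cases hpr : p = r
      · right
        have h4 := congrArg List.length h2
        have h5 := congrArg List.length h1
        rw [hpr] at h5
        simp only [List.length_append] at h4 h5 ⊢
        omega
      · exact Or.inl hpr
    exact middle_not_piece hC hdec hY

end Blk

section Step
variable {R : Set (List A × List A)}

theorem blockedR_step_core (hC : SatisfiesC R 4) {p q r X Y Z Z₁ t' x y : List A}
    (hpq : (p, q) ∈ R ∨ (q, p) ∈ R)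
    (hdec : RelDecomp R r X Y Z) (hZ1 : Z₁ <+: Z)
    (hbr : Z₁ = Z ∨ (BlockedR R t' ∧ ∀ x y, t' = x ++ p ++ y → BlockedR R (x ++ q ++ y)))
    (ht : X ++ Y ++ Z₁ ++ t' = x ++ p ++ y) : BlockedR R (x ++ q ++ y) := by
  have hp : p ∈ RelWords R := mem_relWords_left hpq
  have hq : q ∈ RelWords R := mem_relWords_right hpq
  have hr : r ∈ RelWords R := hdec.1
  obtain ⟨Xq, Yq, Zq, hqdec⟩ := exists_decomp hC hq
  obtain ⟨z₂, hz₂⟩ := hZ1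
  have hre : r = (X ++ Y ++ Z₁) ++ z₂ := by rw [hdec.2.2.2, ← hz₂]; simp
  rcases le_or_gt (x.length + p.length) (X ++ Y ++ Z₁).length with hA | hA
  · -- Case A : p inside X ++ Y ++ Z₁
    obtain ⟨m, hm1, hm2⟩ := split_le (a := x ++ p) (b := y) (c := X ++ Y ++ Z₁) (d := t')
      (by simpa using ht.symm) (by simpa using hA)
    -- hm1 : X ++ Y ++ Z₁ = (x ++ p) ++ m, hm2 : y = m ++ t'
    by_cases hpr : p = r
    · -- p occupies everything; x, m, z₂ empty
      have hl1 := congrArg List.length hm1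
      have hl2 := congrArg List.length hre
      rw [hm1, ← hpr] at hl2
      simp only [List.length_append] at hl1 hl2
      have hx : x = [] := List.eq_nil_of_length_eq_zero (by omega)
      subst hx
      have hgoal : [] ++ q ++ y = Xq ++ Yq ++ Zq ++ y := by rw [hqdec.2.2.2] <;> simp
      rw [hgoal]
      exact BlockedR.full _ _ _ _ _ hqdec
    · exfalso
      have h1 : p = [] ++ p ++ [] := by simp
      have h2 : r = x ++ p ++ (m ++ z₂) := by rw [hre, hm1]; simp
      exact relword_not_piece hC hp (piece_of_two hp hr h1 h2 (Or.inl hpr))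
  · rcases le_or_gt (X ++ Y ++ Z₁).length x.length with hB | hB
    · -- Case B : p inside t'
      obtain ⟨x₂, hx1, hx2⟩ := split_le (a := X ++ Y ++ Z₁) (b := t') (c := x) (d := p ++ y)
        (by simpa using ht) hB
      -- hx1 : x = (X ++ Y ++ Z₁) ++ x₂, hx2 : t' = x₂ ++ (p ++ y)
      have hgoal : x ++ q ++ y = X ++ Y ++ Z₁ ++ (x₂ ++ q ++ y) := by rw [hx1] <;> simp
      rw [hgoal]
      rcases hbr with hbr | ⟨hbr, hrec⟩
      · subst hbr
        exact BlockedR.full _ _ _ _ _ hdec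
      · exact BlockedR.cut _ _ _ _ _ _ hdec ⟨z₂, hz₂⟩ (hrec x₂ y (by rw [hx2] <;> simp))
    · -- Case C : p straddles the boundary
      obtain ⟨m, hm1, hm2⟩ := split_le (a := x) (b := p ++ y) (c := X ++ Y ++ Z₁) (d := t')
        (by simpa using ht.symm) (le_of_lt hB)
      -- hm1 : X ++ Y ++ Z₁ = x ++ m, hm2 : p ++ y = m ++ t'
      have hm1l : X.length + Y.length + Z₁.length = x.length + m.length := by
        have := congrArg List.length hm1; simp only [List.length_append] at this; omega
      have hAl : X.length + Y.length + Z₁.length < x.length + p.length := by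
        simp only [List.length_append] at hA; omega
      have hBl : x.length < X.length + Y.length + Z₁.length := by
        simp only [List.length_append] at hB; omega
      have hmne : m ≠ [] := by
        intro h; rw [h] at hm1l; simp only [List.length_nil] at hm1l; omega
      have hmlep : m.length ≤ p.length := by omega
      obtain ⟨g, hg1, hg2⟩ := split_le (a := m) (b := t') (c := p) (d := y) hm2.symm hmlep
      -- hg1 : p = m ++ g, hg2 : t' = g ++ y
      have hgne : g ≠ [] := by
        intro h
        rw [h, List.append_nil] at hg1
        have h1 := congrArg List.length hg1
        omega
      by_cases hx0 : x = []
      · -- p starts at the very beginning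
        subst hx0
        simp only [List.nil_append] at hm1 ht ⊢
        by_cases hpr : p = r
        · -- full aligned occurrence of r; rewrite to q
          have : q ++ y = Xq ++ Yq ++ Zq ++ y := by rw [hqdec.2.2.2] <;> simp
          rw [this]
          exact BlockedR.full _ _ _ _ _ hqdec
        · exfalso
          have h1 : p = X ++ Y ++ (Z₁ ++ g) := by rw [hg1, ← hm1] <;> simp
          have hY : IsPiece R Y := piece_of_two hp hr h1 hdec.2.2.2 (Or.inl hpr)
          exact middle_not_piece hC hdec hY
      · -- x ≠ []
        have hxlen : x.length ≠ 0 := fun h => hx0 (List.eq_nil_of_length_eq_zero h)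
        have hmp : IsPiece R m := by
          have h1 : p = [] ++ m ++ g := by rw [hg1] <;> simp
          have h2 : r = x ++ m ++ z₂ := by rw [hre, hm1] <;> simp
          refine piece_of_two hp hr h1 h2 ?_
          right; simp only [List.length_nil]; omega
        rcases le_or_gt (X ++ Y).length x.length with hXY | hXY
        · -- p starts inside Z₁ : legitimate cut
          obtain ⟨d₂, hd1, hd2⟩ := split_le (a := X ++ Y) (b := Z₁) (c := x) (d := m)
            (by simpa using hm1) hXY
          -- hd1 : x = (X ++ Y) ++ d₂, hd2 : Z₁ = d₂ ++ m
          have hgoal : x ++ q ++ y = X ++ Y ++ d₂ ++ (q ++ y) := by rw [hd1] <;> simp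
          rw [hgoal]
          refine BlockedR.cut _ _ _ _ _ _ hdec ⟨m ++ z₂, ?_⟩ ?_
          · rw [← hz₂, hd2]; simp
          · have : q ++ y = Xq ++ Yq ++ Zq ++ y := by rw [hqdec.2.2.2] <;> simp
            rw [this]
            exact BlockedR.full _ _ _ _ _ hqdec
        · -- p starts inside X ++ Y : impossible
          exfalso
          rcases hbr with hbr | ⟨hbr, _⟩
          · -- Z₁ = Z : m is a piece suffix of r longer than Z
            subst hbr
            have hz₂nil : z₂ = [] := by
              have := congrArg List.length hz₂; simp only [List.length_append] at this
              exact List.eq_nil_of_length_eq_zero (by omega)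
            subst hz₂nil
            rw [List.append_nil] at hre
            have hms : m <:+ r := ⟨x, by rw [hre, hm1]⟩
            have := hdec.2.2.1.2.2 m hms hmp
            simp only [List.length_append] at hXY
            omega
          · -- t' is blocked : g is a piece, so p is a product of two pieces
            have hgp : IsPiece R g := blockedR_attack hC hbr ⟨y, hg2.symm⟩ hgne hp hmne hg1
            refine no_small hC hp [m, g] ?_ (by simpa using hg1) (by simp)
            intro o ho; simp at ho
            rcases ho with h | h <;> subst h
            · exact hmp
            · exact hgp

theorem blockedR_step (hC : SatisfiesC R 4) {p q : List A}
    (hpq : (p, q) ∈ R ∨ (q, p) ∈ R) {t x y : List A} (hB : BlockedR R t)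
    (ht : t = x ++ p ++ y) : BlockedR R (x ++ q ++ y) := by
  induction hB generalizing x y with
  | full r X Y Z t' hdec =>
    exact blockedR_step_core hC hpq hdec (List.prefix_refl _) (Or.inl rfl) (by rw [← ht])
  | cut r X Y Z Z₁ t' hdec hZ1 hbr ih =>
    exact blockedR_step_core hC hpq hdec hZ1 (Or.inr ⟨hbr, fun a b hab => ih hab⟩) (by rw [← ht])

end Step

section StepL
variable {R : Set (List A × List A)}

theorem blockedL_step_core (hC : SatisfiesC R 4) {p q r X Y Z X₁ s' x y : List A}
    (hpq : (p, q) ∈ R ∨ (q, p) ∈ R)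
    (hdec : RelDecomp R r X Y Z) (hX1 : X₁ <:+ X)
    (hbl : X₁ = X ∨ (BlockedL R s' ∧ ∀ x y, s' = x ++ p ++ y → BlockedL R (x ++ q ++ y)))
    (ht : s' ++ (X₁ ++ Y ++ Z) = x ++ p ++ y) : BlockedL R (x ++ q ++ y) := by
  have hp : p ∈ RelWords R := mem_relWords_left hpq
  have hq : q ∈ RelWords R := mem_relWords_right hpq
  have hr : r ∈ RelWords R := hdec.1
  obtain ⟨Xq, Yq, Zq, hqdec⟩ := exists_decomp hC hq
  obtain ⟨x₂, hx₂⟩ := hX1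
  have hre : r = x₂ ++ (X₁ ++ Y ++ Z) := by rw [hdec.2.2.2, ← hx₂] <;> simp
  rcases le_or_gt s'.length x.length with hA | hA
  · -- Case A' : p inside X₁ ++ Y ++ Z
    obtain ⟨k, hk1, hk2⟩ := split_le (a := s') (b := X₁ ++ Y ++ Z) (c := x) (d := p ++ y)
      (by simpa using ht) hA
    -- hk1 : x = s' ++ k, hk2 : X₁ ++ Y ++ Z = k ++ (p ++ y)
    by_cases hpr : p = r
    · have hl1 := congrArg List.length hk2
      have hl2 := congrArg List.length hre
      rw [hk2, ← hpr] at hl2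
      simp only [List.length_append] at hl1 hl2
      have hy : y = [] := List.eq_nil_of_length_eq_zero (by omega)
      subst hy
      have hgoal : x ++ q ++ [] = x ++ (Xq ++ Yq ++ Zq) := by rw [hqdec.2.2.2] <;> simp
      rw [hgoal]
      exact BlockedL.full _ _ _ _ _ hqdec
    · exfalso
      have h1 : p = [] ++ p ++ [] := by simp
      have h2 : r = (x₂ ++ k) ++ p ++ y := by rw [hre, hk2] <;> simp
      exact relword_not_piece hC hp (piece_of_two hp hr h1 h2 (Or.inl hpr))
  · rcases le_or_gt (x.length + p.length) s'.length with hB | hB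
    · -- Case B' : p inside s'
      obtain ⟨y₂, hy1, hy2⟩ := split_le (a := x ++ p) (b := y) (c := s') (d := X₁ ++ Y ++ Z)
        (by simpa using ht.symm) (by simpa using hB)
      -- hy1 : s' = (x ++ p) ++ y₂, hy2 : y = y₂ ++ (X₁ ++ Y ++ Z)
      have hgoal : x ++ q ++ y = (x ++ q ++ y₂) ++ (X₁ ++ Y ++ Z) := by rw [hy2] <;> simp
      rw [hgoal]
      rcases hbl with hbl | ⟨hbl, hrec⟩
      · subst hbl
        exact BlockedL.full _ _ _ _ _ hdec
      · exact BlockedL.cut _ _ _ _ _ _ hdec ⟨x₂, hx₂⟩ (hrec x y₂ (by rw [hy1] <;> simp))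
    · -- Case C' : p straddles the boundary
      obtain ⟨h, hh1, hh2⟩ := split_le (a := x) (b := p ++ y) (c := s') (d := X₁ ++ Y ++ Z)
        (by simpa using ht.symm) (le_of_lt hA)
      -- hh1 : s' = x ++ h, hh2 : p ++ y = h ++ (X₁ ++ Y ++ Z)
      have hs'l : s'.length = x.length + h.length := by
        have := congrArg List.length hh1; simpa using this
      have hhne : h ≠ [] := by
        intro hc; rw [hc] at hs'l; simp at hs'l; omega
      obtain ⟨m₂, hm1, hm2⟩ := split_le (a := h) (b := X₁ ++ Y ++ Z) (c := p) (d := y)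
        hh2.symm (by omega)
      -- hm1 : p = h ++ m₂, hm2 : X₁ ++ Y ++ Z = m₂ ++ y
      have hm2l : X₁.length + Y.length + Z.length = m₂.length + y.length := by
        have := congrArg List.length hm2; simp only [List.length_append] at this; omega
      have hm2ne : m₂ ≠ [] := by
        intro hc
        rw [hc, List.append_nil] at hm1
        have := congrArg List.length hm1
        omega
      rcases le_or_gt m₂.length X₁.length with hC1 | hC1
      · -- C'1 : p ends inside X₁, legitimate cut of X₁
        obtain ⟨X₂, hX₂1, hX₂2⟩ := split_le (a := m₂) (b := y) (c := X₁) (d := Y ++ Z)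
          (by simpa using hm2.symm) hC1
        -- hX₂1 : X₁ = m₂ ++ X₂, hX₂2 : y = X₂ ++ (Y ++ Z)
        have hgoal : x ++ q ++ y = (x ++ q) ++ (X₂ ++ Y ++ Z) := by rw [hX₂2] <;> simp
        rw [hgoal]
        refine BlockedL.cut _ _ _ _ _ _ hdec ⟨x₂ ++ m₂, ?_⟩ ?_
        · rw [← hx₂, hX₂1] <;> simp
        · have hxq : x ++ q = x ++ (Xq ++ Yq ++ Zq) := by rw [hqdec.2.2.2] <;> simp
          rw [hxq]
          exact BlockedL.full _ _ _ _ _ hqdec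
      · rcases le_or_gt (X₁ ++ Y ++ Z).length m₂.length with hC2 | hC2
        · -- C'2 : p reaches the right end (y = [])
          have hyl : y = [] := by
            refine List.eq_nil_of_length_eq_zero ?_
            simp only [List.length_append] at hC2
            omega
          subst hyl
          rw [List.append_nil] at hm2
          by_cases hpr : p = r
          · have hgoal : x ++ q ++ [] = x ++ (Xq ++ Yq ++ Zq) := by rw [hqdec.2.2.2] <;> simp
            rw [hgoal]
            exact BlockedL.full _ _ _ _ _ hqdec
          · exfalso
            have h1 : p = (h ++ X₁) ++ Y ++ Z := by rw [hm1, ← hm2] <;> simp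
            have h2 : r = (x₂ ++ X₁) ++ Y ++ Z := by rw [hre] <;> simp
            exact middle_not_piece hC hdec (piece_of_two hp hr h1 h2 (Or.inl hpr))
        · -- C'3 : p ends inside Y or Z but not at the end : impossible
          exfalso
          have hm₂p : IsPiece R m₂ := by
            have h1 : p = h ++ m₂ ++ [] := by rw [hm1] <;> simp
            have h2 : r = x₂ ++ m₂ ++ y := by rw [hre, hm2] <;> simp
            refine piece_of_two hp hr h1 h2 ?_
            by_cases hpr : p = r
            · right
              have hl1 := congrArg List.length h1
              have hl2 := congrArg List.length h2
              rw [hpr] at hl1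
              simp only [List.length_append, List.length_nil] at hl1 hl2 hC2 ⊢
              omega
            · exact Or.inl hpr
          rcases hbl with hbl | ⟨hbl, _⟩
          · -- X₁ = X : m₂ is a piece prefix of r longer than X
            have hx₂nil : x₂ = [] := by
              rw [hbl] at hx₂
              have := congrArg List.length hx₂
              simp only [List.length_append] at this
              exact List.eq_nil_of_length_eq_zero (by omega)
            subst hx₂nil
            simp only [List.nil_append] at hre
            have hmpre : m₂ <+: r := ⟨y, by rw [hre, hm2]⟩
            have := hdec.2.1.2.2 m₂ hmpre hm₂p
            rw [hbl] at hC1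
            omega
          · have hhp : IsPiece R h := blockedL_attack hC hbl ⟨x, hh1.symm⟩ hhne hp hm2ne hm1
            refine no_small hC hp [h, m₂] ?_ (by simpa using hm1) (by simp)
            intro o ho; simp at ho
            rcases ho with hc | hc <;> subst hc
            · exact hhp
            · exact hm₂p

theorem blockedL_step (hC : SatisfiesC R 4) {p q : List A}
    (hpq : (p, q) ∈ R ∨ (q, p) ∈ R) {s x y : List A} (hB : BlockedL R s)
    (hs : s = x ++ p ++ y) : BlockedL R (x ++ q ++ y) := by
  induction hB generalizing x y with
  | full r X Y Z s' hdec =>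
    exact blockedL_step_core hC hpq hdec (List.suffix_refl _) (Or.inl rfl) (by rw [← hs])
  | cut r X Y Z X₁ s' hdec hX1 hbl ih =>
    exact blockedL_step_core hC hpq hdec hX1 (Or.inr ⟨hbl, fun a b hab => ih hab⟩) (by rw [← hs])

end StepL

section Main
variable {R : Set (List A × List A)}

theorem invW_step (hC : SatisfiesC R 4) {u v₁ v₂ : List A} (h : InvW R u v₁)
    (hs : OneStep R v₁ v₂) : InvW R u v₂ := by
  obtain ⟨x, y, p, q, hpq, hv1, hv2⟩ := hs
  obtain ⟨u', X', Y', Z', a, X₁, Z₁, t, hcompl, hdec', hX1, hZ1, hXb, hZb, hveq⟩ := h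
  subst hv2
  have hp : p ∈ RelWords R := mem_relWords_left hpq
  have hq : q ∈ RelWords R := mem_relWords_right hpq
  have hu' : u' ∈ RelWords R := hdec'.1
  obtain ⟨Xq, Yq, Zq, hqdec⟩ := exists_decomp hC hq
  obtain ⟨x₂, hx₂⟩ := id hX1
  obtain ⟨z₂, hz₂⟩ := id hZ1
  have hu'e : u' = X' ++ Y' ++ Z' := hdec'.2.2.2
  have hu'e2 : u' = x₂ ++ X₁ ++ Y' ++ Z₁ ++ z₂ := by rw [hu'e, ← hx₂, ← hz₂] <;> simp
  have hv : a ++ X₁ ++ Y' ++ Z₁ ++ t = x ++ p ++ y := by rw [← hveq]; exact hv1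
  -- length abbreviations (as facts fed to omega)
  have hvl : a.length + X₁.length + Y'.length + Z₁.length + t.length
      = x.length + p.length + y.length := by
    have := congrArg List.length hv; simp only [List.length_append] at this; omega
  rcases le_or_gt (x.length + p.length) a.length with hT1 | hT1
  · -- T1 : p inside a
    obtain ⟨y₂, hy1, hy2⟩ := split_le (a := x ++ p) (b := y) (c := a)
      (d := X₁ ++ Y' ++ Z₁ ++ t) (by simpa using hv.symm) (by simpa using hT1)
    refine ⟨u', X', Y', Z', x ++ q ++ y₂, X₁, Z₁, t, hcompl, hdec', hX1, hZ1, ?_, hZb,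
      by rw [hy2] <;> simp⟩
    rcases hXb with hXb | hXb
    · exact Or.inl hXb
    · exact Or.inr (blockedL_step hC hpq hXb (by rw [hy1]))
  · rcases le_or_gt (a.length + X₁.length + Y'.length + Z₁.length) x.length with hT2 | hT2
    · -- T2 : p inside t
      obtain ⟨x₃, hx1, hx2⟩ := split_le (a := a ++ X₁ ++ Y' ++ Z₁) (b := t) (c := x)
        (d := p ++ y) (by simpa using hv) (by simp only [List.length_append]; omega)
      refine ⟨u', X', Y', Z', a, X₁, Z₁, x₃ ++ q ++ y, hcompl, hdec', hX1, hZ1, hXb, ?_,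
        by rw [hx1] <;> simp⟩
      rcases hZb with hZb | hZb
      · exact Or.inl hZb
      · exact Or.inr (blockedR_step hC hpq hZb (by rw [hx2] <;> simp))
    · by_cases hT4 : x.length ≤ a.length + X₁.length ∧
        a.length + X₁.length + Y'.length ≤ x.length + p.length
      · -- T4 : p covers the Y' region
        obtain ⟨α, hα1, hα2⟩ := split_le (a := x) (b := p ++ y) (c := a ++ X₁)
          (d := Y' ++ Z₁ ++ t) (by simpa using hv.symm) (by simpa using hT4.1)
        have hαl : x.length + α.length = a.length + X₁.length := by
          have := congrArg List.length hα1; simp only [List.length_append] at this ⊢; omega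
        obtain ⟨β, hβ1, hβ2⟩ := split_le (a := α ++ Y') (b := Z₁ ++ t) (c := p) (d := y)
          (by simpa using hα2.symm) (by simp only [List.length_append]; omega)
        -- hβ1 : p = (α ++ Y') ++ β
        by_cases hpal : p = u' ∧ α.length = X'.length
        · -- aligned full occurrence of u' : rewrite it to q
          have hcompl' : ComplRel R u q := by
            refine hcompl.tail ?_
            rw [← hpal.1]
            exact hpq
          exact ⟨q, Xq, Yq, Zq, x, Xq, Zq, y, hcompl', hqdec, List.suffix_refl _,
            List.prefix_refl _, Or.inl rfl, Or.inl rfl, by rw [hqdec.2.2.2] <;> simp⟩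
        · exfalso
          have h1 : p = α ++ Y' ++ β := by rw [hβ1] <;> simp
          have hYp : IsPiece R Y' := by
            refine piece_of_two hp hu' h1 hu'e ?_
            by_cases hpu : p = u'
            · right
              intro hc
              exact hpal ⟨hpu, hc⟩
            · exact Or.inl hpu
          exact middle_not_piece hC hdec' hYp
      · by_cases hT3 : a.length ≤ x.length ∧
          x.length + p.length ≤ a.length + X₁.length + Y'.length + Z₁.length
        · -- T3 : p inside the core X₁ ++ Y' ++ Z₁ (but not covering Y') : impossible
          exfalso
          obtain ⟨k, hk1, hk2⟩ := split_le (a := a) (b := X₁ ++ Y' ++ Z₁ ++ t) (c := x)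
            (d := p ++ y) (by simpa using hv) hT3.1
          have hkl : x.length = a.length + k.length := by
            have := congrArg List.length hk1; simp only [List.length_append] at this; omega
          obtain ⟨k₂, hk3, hk4⟩ := split_le (a := k ++ p) (b := y) (c := X₁ ++ Y' ++ Z₁)
            (d := t) (by simpa using hk2.symm) (by simp only [List.length_append]; omega)
          -- hk3 : X₁ ++ Y' ++ Z₁ = (k ++ p) ++ k₂
          have hu'e3 : u' = (x₂ ++ k) ++ p ++ (k₂ ++ z₂) := by
            have h5 : u' = x₂ ++ (X₁ ++ Y' ++ Z₁) ++ z₂ := by rw [hu'e2] <;> simp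
            rw [h5, hk3] <;> simp
          have hk3l : X₁.length + Y'.length + Z₁.length = k.length + p.length + k₂.length := by
            have := congrArg List.length hk3; simp only [List.length_append] at this; omega
          by_cases hpu : p = u'
          · have hl := congrArg List.length hu'e3
            rw [← hpu] at hl
            simp only [List.length_append] at hl
            have hx₂l := congrArg List.length hx₂
            have hz₂l := congrArg List.length hz₂
            simp only [List.length_append] at hx₂l hz₂l
            exact hT4 ⟨by omega, by omega⟩
          · have h1 : p = [] ++ p ++ [] := by simp
            exact relword_not_piece hC hp (piece_of_two hp hu' h1 hu'e3 (Or.inl hpu))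
        · rcases lt_or_ge x.length a.length with hi | hi
          · -- p starts inside a
            obtain ⟨h, hh1, hh2⟩ := split_le (a := x) (b := p ++ y) (c := a)
              (d := X₁ ++ Y' ++ Z₁ ++ t) (by simpa using hv.symm) (le_of_lt hi)
            have hhl : a.length = x.length + h.length := by
              have := congrArg List.length hh1; simp only [List.length_append] at this; omega
            have hhne : h ≠ [] := by
              intro hc; rw [hc] at hhl; simp at hhl; omega
            obtain ⟨o, ho1, ho2⟩ := split_le (a := h) (b := X₁ ++ Y' ++ Z₁ ++ t) (c := p)
              (d := y) (by simpa using hh2.symm) (by omega)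
            -- ho1 : p = h ++ o, ho2 : X₁ ++ Y' ++ Z₁ ++ t = o ++ y
            have hol : p.length = h.length + o.length := by
              have := congrArg List.length ho1; simp only [List.length_append] at this; omega
            rcases le_or_gt (x.length + p.length) (a.length + X₁.length) with hT5d | hT5d
            · -- T5d : p eats a suffix of a and a prefix of X₁ : rebuild left side
              obtain ⟨X₂, hX₂1, hX₂2⟩ := split_le (a := o) (b := y) (c := X₁)
                (d := Y' ++ Z₁ ++ t) (by simpa using ho2.symm) (by omega)
              refine ⟨u', X', Y', Z', x ++ q, X₂, Z₁, t, hcompl, hdec',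
                ⟨x₂ ++ o, by rw [← hx₂, hX₂1] <;> simp⟩, hZ1, ?_, hZb,
                by rw [hX₂2] <;> simp⟩
              refine Or.inr ?_
              have hxq : x ++ q = x ++ (Xq ++ Yq ++ Zq) := by rw [hqdec.2.2.2] <;> simp
              rw [hxq]
              exact BlockedL.full _ _ _ _ _ hqdec
            · -- T5a : p ends strictly inside Y' : impossible
              exfalso
              -- e < B since ¬T4 and i < la ≤ A
              have heB : x.length + p.length < a.length + X₁.length + Y'.length := by
                rcases not_and_or.1 hT4 with hc | hc <;> omega
              obtain ⟨w₁, hw1, hw2⟩ := split_le (a := X₁) (b := Y' ++ Z₁ ++ t) (c := o)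
                (d := y) (by simpa using ho2) (by omega)
              -- hw1 : o = X₁ ++ w₁, hw2 : Y' ++ Z₁ ++ t = w₁ ++ y
              have hw1l : o.length = X₁.length + w₁.length := by
                have := congrArg List.length hw1; simp only [List.length_append] at this; omega
              obtain ⟨y₁, hy1, hy2⟩ := split_le (a := w₁) (b := y) (c := Y')
                (d := Z₁ ++ t) (by simpa using hw2.symm) (by omega)
              -- hy1 : Y' = w₁ ++ y₁
              have hy1l : Y'.length = w₁.length + y₁.length := by
                have := congrArg List.length hy1; simp only [List.length_append] at this; omega
              have hone : o ≠ [] := by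
                intro hc; rw [hc] at hw1l hol; simp at hw1l hol; omega
              have hop : IsPiece R o := by
                have h1 : p = h ++ o ++ [] := by rw [ho1] <;> simp
                have h2 : u' = x₂ ++ o ++ (y₁ ++ Z') := by
                  rw [hu'e, ← hx₂, hy1, hw1] <;> simp
                refine piece_of_two hp hu' h1 h2 ?_
                by_cases hpu : p = u'
                · right
                  have hl := congrArg List.length hu'e
                  rw [← hpu] at hl
                  simp only [List.length_append, List.length_nil] at hl ⊢
                  have hx₂l := congrArg List.length hx₂
                  simp only [List.length_append] at hx₂l
                  omega
                · exact Or.inl hpu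
              rcases hXb with hXb | hXb
              · -- X₁ = X' : o is a piece prefix of u' longer than X'
                have hx₂nil : x₂ = [] := by
                  rw [hXb] at hx₂
                  have := congrArg List.length hx₂
                  simp only [List.length_append] at this
                  exact List.eq_nil_of_length_eq_zero (by omega)
                have hopre : o <+: u' := by
                  refine ⟨y₁ ++ Z', ?_⟩
                  rw [hu'e, ← hx₂, hx₂nil, hy1, hw1] <;> simp
                have := hdec'.2.1.2.2 o hopre hop
                have hXbl : X₁.length = X'.length := by rw [hXb]
                omega
              · have hhp : IsPiece R h :=
                  blockedL_attack hC hXb ⟨x, hh1.symm⟩ hhne hp hone ho1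
                refine no_small hC hp [h, o] ?_ (by simpa using ho1) (by simp)
                intro o' ho'; simp at ho'
                rcases ho' with hc | hc <;> subst hc
                · exact hhp
                · exact hop
          · -- la ≤ i : then A < i < C and e > C
            have hiA : a.length + X₁.length < x.length := by
              rcases not_and_or.1 hT4 with hc | hc
              · omega
              · exfalso
                rcases not_and_or.1 hT3 with hd | hd <;> omega
            have heC : a.length + X₁.length + Y'.length + Z₁.length < x.length + p.length := by
              rcases not_and_or.1 hT3 with hd | hd <;> omega
            rcases lt_or_ge x.length (a.length + X₁.length + Y'.length) with hT5b | hT5b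
            · -- T5b : p starts strictly inside Y' : impossible
              exfalso
              obtain ⟨d₁, hd1, hd2⟩ := split_le (a := a ++ X₁) (b := Y' ++ Z₁ ++ t) (c := x)
                (d := p ++ y) (by simpa using hv) (by simp only [List.length_append]; omega)
              have hd1l : x.length = a.length + X₁.length + d₁.length := by
                have := congrArg List.length hd1; simp only [List.length_append] at this; omega
              obtain ⟨m₁, hm1, hm2⟩ := split_le (a := d₁) (b := p ++ y) (c := Y')
                (d := Z₁ ++ t) (by simpa using hd2.symm) (by omega)
              -- hm1 : Y' = d₁ ++ m₁, hm2 : p ++ y = m₁ ++ (Z₁ ++ t)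
              have hm1l : Y'.length = d₁.length + m₁.length := by
                have := congrArg List.length hm1; simp only [List.length_append] at this; omega
              obtain ⟨g, hg1, hg2⟩ := split_le (a := m₁ ++ Z₁) (b := t) (c := p) (d := y)
                (by simpa using hm2.symm) (by simp only [List.length_append]; omega)
              have hgne : g ≠ [] := by
                intro hc
                rw [hc, List.append_nil] at hg1
                have := congrArg List.length hg1
                simp only [List.length_append] at this
                omega
              have hd₁ne : d₁ ≠ [] := by
                intro hc; rw [hc] at hd1l; simp at hd1l; omega
              have hMp : IsPiece R (m₁ ++ Z₁) := by
                have h1 : p = [] ++ (m₁ ++ Z₁) ++ g := by rw [hg1] <;> simp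
                have h2 : u' = (x₂ ++ X₁ ++ d₁) ++ (m₁ ++ Z₁) ++ z₂ := by
                  rw [hu'e, ← hx₂, ← hz₂, hm1] <;> simp
                refine piece_of_two hp hu' h1 h2 ?_
                right
                simp only [List.length_nil, List.length_append]
                have : d₁.length ≠ 0 := fun hc => hd₁ne (List.eq_nil_of_length_eq_zero hc)
                omega
              rcases hZb with hZb | hZb
              · -- Z₁ = Z' : m₁ ++ Z₁ is a piece suffix of u' longer than Z'
                have hz₂nil : z₂ = [] := by
                  rw [hZb] at hz₂
                  have := congrArg List.length hz₂
                  simp only [List.length_append] at this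
                  exact List.eq_nil_of_length_eq_zero (by omega)
                have hMsuf : (m₁ ++ Z₁) <:+ u' := by
                  refine ⟨x₂ ++ X₁ ++ d₁, ?_⟩
                  rw [hu'e, ← hx₂, ← hz₂, hz₂nil, hm1] <;> simp
                have hmax := hdec'.2.2.1.2.2 _ hMsuf hMp
                simp only [List.length_append] at hmax
                have hZbl : Z₁.length = Z'.length := by rw [hZb]
                omega
              · have hgp : IsPiece R g := by
                  refine blockedR_attack hC hZb ⟨y, ?_⟩ hgne hp ?_ (by rw [hg1] <;> simp)
                  ·
                    exact hg2.symm
                  · intro hc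
                    have := congrArg List.length hc
                    simp only [List.length_append, List.length_nil] at this
                    omega
                refine no_small hC hp [m₁ ++ Z₁, g] ?_ (by simpa using hg1) (by simp)
                intro o' ho'; simp at ho'
                rcases ho' with hc | hc <;> subst hc
                · exact hMp
                · exact hgp
            · -- T5c : p starts inside Z₁ and extends past it : cut Z₁ there
              obtain ⟨d₂, hd1, hd2⟩ := split_le (a := a ++ X₁ ++ Y') (b := Z₁ ++ t) (c := x)
                (d := p ++ y) (by simpa using hv) (by simp only [List.length_append]; omega)
              have hd2l : x.length = a.length + X₁.length + Y'.length + d₂.length := by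
                have := congrArg List.length hd1; simp only [List.length_append] at this; omega
              obtain ⟨m, hm1, hm2⟩ := split_le (a := d₂) (b := p ++ y) (c := Z₁) (d := t)
                (by simpa using hd2.symm) (by omega)
              -- hm1 : Z₁ = d₂ ++ m, hm2 : p ++ y = m ++ t
              have hm1l : Z₁.length = d₂.length + m.length := by
                have := congrArg List.length hm1; simp only [List.length_append] at this; omega
              obtain ⟨g, hg1, hg2⟩ := split_le (a := m) (b := t) (c := p) (d := y)
                hm2.symm (by omega)
              refine ⟨u', X', Y', Z', a, X₁, d₂, q ++ y, hcompl, hdec', hX1,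
                ⟨m ++ z₂, by rw [← hz₂, hm1] <;> simp⟩, hXb, ?_, by rw [hd1] <;> simp⟩
              refine Or.inr ?_
              have hqy : q ++ y = Xq ++ Yq ++ Zq ++ y := by rw [hqdec.2.2.2] <;> simp
              rw [hqy]
              exact BlockedR.full _ _ _ _ _ hqdec

end Main

section Fin
variable {R : Set (List A × List A)}

theorem oneStep_symm {a b : List A} (h : OneStep R a b) : OneStep R b a := by
  obtain ⟨x, y, p, q, hpq, h1, h2⟩ := h
  exact ⟨x, y, q, p, hpq.symm, h2, h1⟩

theorem cong_rtg {w w' : List A} (h : Cong R w w') :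
    Relation.ReflTransGen (OneStep R) w w' := by
  refine h _ ⟨⟨fun _ => Relation.ReflTransGen.refl, ?_, fun h1 h2 => h1.trans h2⟩, ?_⟩ ?_
  · intro
    intro b hab
    haveI : Std.Symm (OneStep R) := ⟨fun c d hcd => oneStep_symm hcd⟩
    exact Relation.ReflTransGen.symmetric.symm _ _ hab
  · intro c d x y hcd
    induction hcd with
    | refl => exact Relation.ReflTransGen.refl
    | tail h1 h2 ih =>
      refine ih.tail ?_
      obtain ⟨x₁, y₁, p, q, hpq, hb, hc⟩ := h2
      exact ⟨x ++ x₁, y₁ ++ y, p, q, hpq, by rw [hb] <;> simp, by rw [hc] <;> simp⟩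
  · intro pq hpq
    exact Relation.ReflTransGen.single ⟨[], [], pq.1, pq.2, Or.inl hpq, by simp, by simp⟩

theorem middle_word_in_equivalent' (R : Set (List A × List A)) (hC : SatisfiesC R 4)
    (u Y : List A) (hu : u ∈ RelWords R) (hY : MiddleWord R u Y)
    (w w' : List A) (hww' : Cong R w w') (hfac : u <:+: w') :
    Y <:+: w ∨ ∃ u' Y', ComplRel R u u' ∧ MiddleWord R u' Y' ∧ Y' <:+: w := by
  obtain ⟨X, Z, hdec⟩ := hY
  obtain ⟨α, β, hw'⟩ := hfac
  have hinv0 : InvW R u w' := by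
    refine ⟨u, X, Y, Z, α, X, Z, β, Relation.ReflTransGen.refl, hdec, List.suffix_refl _,
      List.prefix_refl _, Or.inl rfl, Or.inl rfl, ?_⟩
    rw [← hw', hdec.2.2.2] <;> simp
  have hrtg : Relation.ReflTransGen (OneStep R) w w' := cong_rtg hww'
  have hinvw : InvW R u w := by
    clear hww' hw' hu hdec
    induction hrtg using Relation.ReflTransGen.head_induction_on with
    | refl => exact hinv0
    | head h1 h2 ih => exact invW_step hC ih (oneStep_symm h1)
  obtain ⟨u', X', Y', Z', a, X₁, Z₁, t, hcompl, hdec', _, _, _, _, hveq⟩ := hinvw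
  refine Or.inr ⟨u', Y', hcompl, ⟨X', Z', hdec'⟩, ⟨a ++ X₁, Z₁ ++ t, ?_⟩⟩
  rw [hveq] <;> simp

end Fin

/-- if a relation word `u` appears as a factor of some word equivalent to `w`,
then `w` contains `Y_u` or the middle word of some complement of `u` as a factor. -/
theorem middle_word_in_equivalent (R : Set (List A × List A)) (hC : SatisfiesC R 4)
    (u Y : List A) (hu : u ∈ RelWords R) (hY : MiddleWord R u Y)
    (w w' : List A) (hww' : Cong R w w') (hfac : u <:+: w') :
    Y <:+: w ∨ ∃ u' Y', ComplRel R u u' ∧ MiddleWord R u' Y' ∧ Y' <:+: w := by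
  exact middle_word_in_equivalent' R hC u Y hu hY w w' hww' hfac
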